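/- (Theorem 1) Let μ be a probability measure on ℝ^{N·n_x} absolutely continuous with respect to Lebesgue measure, X̂ ∈ ℝ^{N·n_x} with pairwise distinct blocks, and ν = Σ_π μ(S_π) δ_{π(X̂)}. Then E_μ[min_π ‖X − π(X̂)‖²] = W₂²(μ, ν); i.e., the MOSPA equals the squared 2-Wasserstein distance between μ and the induced discrete measure ν. -/

import Mathlib

open MeasureTheory ENNReal

noncomputable section

/-- Stacked state space: `N` blocks each in `ℝ^{n_x}`. -/
abbrev E (N nx : ℕ) := EuclideanSpace ℝ (Fin N × Fin nx)

/-- Block-permutation of a stacked vector. -/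
def permute {N nx : ℕ} (π : Equiv.Perm (Fin N)) (X : E N nx) : E N nx :=
  WithLp.toLp 2 (fun p => X (π p.1, p.2))

/-- The region where the permutation `π` gives the nearest permuted copy of `Xhat`. -/
def Spi {N nx : ℕ} (Xhat : E N nx) (π : Equiv.Perm (Fin N)) : Set (E N nx) :=
  {X | ∀ τ : Equiv.Perm (Fin N), ‖X - permute π Xhat‖ ^ 2 ≤ ‖X - permute τ Xhat‖ ^ 2}

/-- The OSPA distance as an `ℝ≥0∞`-valued quantity. -/
def ospaE {N nx : ℕ} (X Xhat : E N nx) : ℝ≥0∞ :=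
  ⨅ π : Equiv.Perm (Fin N), (‖X - permute π Xhat‖₊ : ℝ≥0∞) ^ 2

/-- Squared 2-Wasserstein distance (infimum over couplings of the expected
squared Euclidean distance), as an `ℝ≥0∞`-valued quantity. -/
def W2sq {N nx : ℕ} (μ ν : Measure (E N nx)) : ℝ≥0∞ :=
  ⨅ (γ : Measure (E N nx × E N nx))
    (_ : γ.map Prod.fst = μ ∧ γ.map Prod.snd = ν),
      ∫⁻ p, (‖p.1 - p.2‖₊ : ℝ≥0∞) ^ 2 ∂γ

variable {N nx : ℕ}

lemma permute_inj (Xhat : E N nx)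
    (hdist : ∀ i j : Fin N, i ≠ j → (fun k => Xhat (i, k)) ≠ (fun k => Xhat (j, k)))
    {π τ : Equiv.Perm (Fin N)} (h : π ≠ τ) : permute π Xhat ≠ permute τ Xhat := by
  intro heq
  obtain ⟨i, hi⟩ : ∃ i, π i ≠ τ i := by
    by_contra hc
    push_neg at hc
    exact h (Equiv.ext hc)
  exact hdist (π i) (τ i) hi (funext fun k => congrArg (fun v : E N nx => v (i, k)) heq)

lemma measurable_cost (c : E N nx) :
    Measurable (fun x : E N nx => (‖x - c‖₊ : ℝ≥0∞) ^ 2) :=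
  ((continuous_id.sub continuous_const).nnnorm.measurable.coe_nnreal_ennreal).pow_const 2

lemma measurable_ospa (Xhat : E N nx) : Measurable (fun x => ospaE x Xhat) :=
  Measurable.iInf fun π => measurable_cost (permute π Xhat)

lemma measurableSet_Spi (Xhat : E N nx) (π : Equiv.Perm (Fin N)) :
    MeasurableSet (Spi Xhat π) := by
  have : Spi Xhat π = ⋂ τ : Equiv.Perm (Fin N),
      {X : E N nx | ‖X - permute π Xhat‖ ^ 2 ≤ ‖X - permute τ Xhat‖ ^ 2} := by
    ext x; simp [Spi, Set.mem_iInter]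
  rw [this]
  refine MeasurableSet.iInter fun τ => measurableSet_le ?_ ?_
  · exact (((continuous_id.sub continuous_const).norm).pow 2).measurable
  · exact (((continuous_id.sub continuous_const).norm).pow 2).measurable

lemma iUnion_Spi (Xhat : E N nx) : (⋃ π : Equiv.Perm (Fin N), Spi Xhat π) = Set.univ := by
  ext x
  simp only [Set.mem_iUnion, Set.mem_univ, iff_true]
  obtain ⟨π, -, hπ⟩ := Finset.exists_min_image Finset.univ
    (fun τ : Equiv.Perm (Fin N) => ‖x - permute τ Xhat‖ ^ 2) ⟨1, Finset.mem_univ 1⟩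
  exact ⟨π, fun τ => hπ τ (Finset.mem_univ τ)⟩

lemma volume_Spi_inter (Xhat : E N nx)
    (hdist : ∀ i j : Fin N, i ≠ j → (fun k => Xhat (i, k)) ≠ (fun k => Xhat (j, k)))
    {π τ : Equiv.Perm (Fin N)} (h : π ≠ τ) :
    volume (Spi Xhat π ∩ Spi Xhat τ) = 0 := by
  have hsub : Spi Xhat π ∩ Spi Xhat τ ⊆
      (AffineSubspace.perpBisector (permute π Xhat) (permute τ Xhat) : Set (E N nx)) := by
    rintro x ⟨h1, h2⟩
    rw [SetLike.mem_coe, AffineSubspace.mem_perpBisector_iff_dist_eq]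
    have e1 := h1 τ
    have e2 := h2 π
    have : ‖x - permute π Xhat‖ = ‖x - permute τ Xhat‖ := by
      have := le_antisymm e1 e2
      nlinarith [norm_nonneg (x - permute π Xhat), norm_nonneg (x - permute τ Xhat)]
    simpa [dist_eq_norm] using this
  refine measure_mono_null hsub ?_
  exact Measure.addHaar_affineSubspace volume _
    (by simpa using (permute_inj Xhat hdist h))

/-- Tie-broken cell for `π`: points of `Spi π` not in any earlier `Spi τ`. -/
def Apart (Xhat : E N nx) (π : Equiv.Perm (Fin N)) : Set (E N nx) :=
  Spi Xhat π \ ⋃ (τ : Equiv.Perm (Fin N))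
    (_ : Fintype.equivFin (Equiv.Perm (Fin N)) τ < Fintype.equivFin (Equiv.Perm (Fin N)) π),
      Spi Xhat τ

lemma Apart_subset (Xhat : E N nx) (π : Equiv.Perm (Fin N)) : Apart Xhat π ⊆ Spi Xhat π :=
  Set.diff_subset

lemma measurableSet_Apart (Xhat : E N nx) (π : Equiv.Perm (Fin N)) :
    MeasurableSet (Apart Xhat π) :=
  (measurableSet_Spi Xhat π).diff
    (MeasurableSet.iUnion fun τ => MeasurableSet.iUnion fun _ => measurableSet_Spi Xhat τ)

lemma disjoint_Apart (Xhat : E N nx) {π τ : Equiv.Perm (Fin N)} (h : π ≠ τ) :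
    Disjoint (Apart Xhat π) (Apart Xhat τ) := by
  set e := Fintype.equivFin (Equiv.Perm (Fin N))
  rw [Set.disjoint_left]
  rintro x ⟨hx1, hx2⟩ ⟨hy1, hy2⟩
  rcases lt_trichotomy (e π) (e τ) with hlt | heq | hlt
  · exact hy2 (Set.mem_iUnion.2 ⟨π, Set.mem_iUnion.2 ⟨hlt, hx1⟩⟩)
  · exact h (e.injective (Fin.ext (by exact_mod_cast congrArg Fin.val heq)))
  · exact hx2 (Set.mem_iUnion.2 ⟨τ, Set.mem_iUnion.2 ⟨hlt, hy1⟩⟩)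

lemma iUnion_Apart (Xhat : E N nx) :
    (⋃ π : Equiv.Perm (Fin N), Apart Xhat π) = Set.univ := by
  set e := Fintype.equivFin (Equiv.Perm (Fin N))
  ext x
  simp only [Set.mem_iUnion, Set.mem_univ, iff_true]
  have hx : x ∈ ⋃ π : Equiv.Perm (Fin N), Spi Xhat π := by
    rw [iUnion_Spi]; trivial
  obtain ⟨π₀, hπ₀⟩ := Set.mem_iUnion.1 hx
  classical
  obtain ⟨π, hmem, hmin⟩ := Finset.exists_min_image
    (Finset.univ.filter fun τ => x ∈ Spi Xhat τ) (fun τ => e τ)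
    ⟨π₀, Finset.mem_filter.2 ⟨Finset.mem_univ _, hπ₀⟩⟩
  refine ⟨π, (Finset.mem_filter.1 hmem).2, ?_⟩
  intro hbad
  obtain ⟨τ, hτ⟩ := Set.mem_iUnion.1 hbad
  obtain ⟨hlt, hxτ⟩ := Set.mem_iUnion.1 hτ
  exact absurd (hmin τ (Finset.mem_filter.2 ⟨Finset.mem_univ _, hxτ⟩)) (not_le.2 hlt)

lemma measure_Apart (μ : Measure (E N nx)) (hac : μ ≪ volume) (Xhat : E N nx)
    (hdist : ∀ i j : Fin N, i ≠ j → (fun k => Xhat (i, k)) ≠ (fun k => Xhat (j, k)))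
    (π : Equiv.Perm (Fin N)) : μ (Apart Xhat π) = μ (Spi Xhat π) := by
  refine measure_diff_null' ?_
  rw [Set.inter_iUnion]
  refine measure_iUnion_null fun τ => ?_
  rw [Set.inter_iUnion]
  refine measure_iUnion_null fun hlt => ?_
  have hne : π ≠ τ := by
    rintro rfl; exact lt_irrefl _ hlt
  exact hac (volume_Spi_inter Xhat hdist hne)

lemma ospa_eq_on_Spi (Xhat : E N nx) {π : Equiv.Perm (Fin N)} {x : E N nx}
    (hx : x ∈ Spi Xhat π) :
    ospaE x Xhat = (‖x - permute π Xhat‖₊ : ℝ≥0∞) ^ 2 := by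
  refine le_antisymm (iInf_le _ π) (le_iInf fun τ => ?_)
  have h := hx τ
  have hn : ‖x - permute π Xhat‖ ≤ ‖x - permute τ Xhat‖ := by
    nlinarith [norm_nonneg (x - permute π Xhat), norm_nonneg (x - permute τ Xhat)]
  have : (‖x - permute π Xhat‖₊ : ℝ≥0∞) ≤ (‖x - permute τ Xhat‖₊ : ℝ≥0∞) := by
    exact_mod_cast hn
  exact pow_le_pow_left₀ (by positivity) this 2

/-- Theorem 1: for absolutely continuous `μ` with finite second moment and `Xhat` with
pairwise distinct blocks, the MOSPA equals the squared 2-Wasserstein distance between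
`μ` and the induced discrete measure `ν = Σ_π μ(S_π) δ_{π(Xhat)}`. -/
theorem stmt5 {N nx : ℕ} (μ : Measure (E N nx)) [IsProbabilityMeasure μ]
    (hac : μ ≪ volume) (hsec : ∫⁻ x, (‖x‖₊ : ℝ≥0∞) ^ 2 ∂μ < ⊤)
    (Xhat : E N nx)
    (hdist : ∀ i j : Fin N, i ≠ j → (fun k => Xhat (i, k)) ≠ (fun k => Xhat (j, k))) :
    ∫⁻ x, ospaE x Xhat ∂μ =
      W2sq μ (∑ π : Equiv.Perm (Fin N), μ (Spi Xhat π) • Measure.dirac (permute π Xhat)) := by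
  classical
  set g : Equiv.Perm (Fin N) → E N nx → E N nx × E N nx :=
      fun π x => (x, permute π Xhat) with hg
  have hgm : ∀ π, Measurable (g π) := fun π => measurable_id.prodMk measurable_const
  set γ : Measure (E N nx × E N nx) :=
    ∑ π : Equiv.Perm (Fin N), (μ.restrict (Apart Xhat π)).map (g π) with hγ
  have hpm : Measurable fun p : E N nx × E N nx => (‖p.1 - p.2‖₊ : ℝ≥0∞) ^ 2 :=
    ((measurable_fst.sub measurable_snd).nnnorm.coe_nnreal_ennreal).pow_const 2
  -- first marginal
  have hfst : γ.map Prod.fst = μ := by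
    ext s hs
    rw [Measure.map_apply measurable_fst hs, hγ, Measure.finset_sum_apply]
    have hterm : ∀ π, ((μ.restrict (Apart Xhat π)).map (g π)) (Prod.fst ⁻¹' s)
        = μ (s ∩ Apart Xhat π) := by
      intro π
      rw [Measure.map_apply (hgm π) (measurable_fst hs)]
      have hpre : g π ⁻¹' (Prod.fst ⁻¹' s) = s := rfl
      rw [hpre, Measure.restrict_apply hs]
    simp_rw [hterm]
    rw [← measure_biUnion_finset (fun π _ τ _ hne =>
          (Set.disjoint_left.2 fun a ha hb => (Set.disjoint_left.1
            (disjoint_Apart Xhat hne)) ha.2 hb.2 : Disjoint (s ∩ Apart Xhat π) (s ∩ Apart Xhat τ)))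
        (fun π _ => hs.inter (measurableSet_Apart Xhat π))]
    congr 1
    ext x
    simp only [Set.mem_iUnion, Finset.mem_univ, Set.mem_inter_iff, exists_and_left, true_and]
    constructor
    · rintro ⟨hx, -⟩; exact hx
    · intro hx
      have : x ∈ ⋃ π : Equiv.Perm (Fin N), Apart Xhat π := by rw [iUnion_Apart]; trivial
      obtain ⟨π, hπ⟩ := Set.mem_iUnion.1 this
      exact ⟨hx, π, ⟨trivial, hπ⟩⟩
  -- second marginal
  have hsnd : γ.map Prod.snd
      = ∑ π : Equiv.Perm (Fin N), μ (Spi Xhat π) • Measure.dirac (permute π Xhat) := by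
    ext s hs
    rw [Measure.map_apply measurable_snd hs, hγ, Measure.finset_sum_apply,
      Measure.finset_sum_apply]
    refine Finset.sum_congr rfl fun π _ => ?_
    rw [Measure.map_apply (hgm π) (measurable_snd hs)]
    have hpre : g π ⁻¹' (Prod.snd ⁻¹' s) = if permute π Xhat ∈ s then Set.univ else ∅ := by
      by_cases h : permute π Xhat ∈ s <;> ext x <;> simp [hg, h]
    rw [hpre, Measure.smul_apply, Measure.dirac_apply' _ hs]
    by_cases h : permute π Xhat ∈ s
    · rw [if_pos h, Set.indicator_of_mem h, Measure.restrict_apply MeasurableSet.univ,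
        Set.univ_inter, measure_Apart μ hac Xhat hdist π]
      simp
    · rw [if_neg h, Set.indicator_of_notMem h]
      simp
  -- cost of the coupling
  have hcost : ∫⁻ p, (‖p.1 - p.2‖₊ : ℝ≥0∞) ^ 2 ∂γ = ∫⁻ x, ospaE x Xhat ∂μ := by
    rw [hγ, lintegral_finset_sum_measure]
    have hterm : ∀ π, ∫⁻ p, (‖p.1 - p.2‖₊ : ℝ≥0∞) ^ 2
        ∂((μ.restrict (Apart Xhat π)).map (g π))
        = ∫⁻ x in Apart Xhat π, ospaE x Xhat ∂μ := by
      intro π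
      rw [lintegral_map hpm (hgm π)]
      refine setLIntegral_congr_fun (measurableSet_Apart Xhat π) ?_
      exact fun x hx => (ospa_eq_on_Spi Xhat (Apart_subset Xhat π hx)).symm
    simp_rw [hterm]
    rw [← tsum_fintype (L := SummationFilter.unconditional _), ← lintegral_iUnion (fun π => measurableSet_Apart Xhat π)
      (fun π τ hne => disjoint_Apart Xhat hne), iUnion_Apart, Measure.restrict_univ]
  refine le_antisymm ?_ ?_
  · -- lower bound: every coupling costs at least the MOSPA
    refine le_iInf fun γ' => le_iInf fun hcpl => ?_
    obtain ⟨h1, h2⟩ := hcpl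
    have hμeq : ∫⁻ x, ospaE x Xhat ∂μ = ∫⁻ p, ospaE p.1 Xhat ∂γ' := by
      rw [← h1, lintegral_map (measurable_ospa Xhat) measurable_fst]
    rw [hμeq]
    refine lintegral_mono_ae ?_
    have hFmeas : MeasurableSet (Set.range fun π : Equiv.Perm (Fin N) => permute π Xhat) :=
      (Set.finite_range _).measurableSet
    have hae : ∀ᵐ p ∂γ', p.2 ∈ Set.range fun π : Equiv.Perm (Fin N) => permute π Xhat := by
      rw [ae_iff]
      have : {p : E N nx × E N nx | ¬ p.2 ∈ Set.range fun π : Equiv.Perm (Fin N) =>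
          permute π Xhat} = Prod.snd ⁻¹'
          (Set.range fun π : Equiv.Perm (Fin N) => permute π Xhat)ᶜ := rfl
      rw [this, ← Measure.map_apply measurable_snd hFmeas.compl, h2,
        Measure.finset_sum_apply]
      refine Finset.sum_eq_zero fun π _ => ?_
      rw [Measure.smul_apply, Measure.dirac_apply' _ hFmeas.compl,
        Set.indicator_of_notMem (by simp [Set.mem_range])]
      simp
    filter_upwards [hae] with p hp
    obtain ⟨π, hπ⟩ := hp
    calc ospaE p.1 Xhat ≤ (‖p.1 - permute π Xhat‖₊ : ℝ≥0∞) ^ 2 := iInf_le _ π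
      _ = (‖p.1 - p.2‖₊ : ℝ≥0∞) ^ 2 := by simp only [← hπ]
  · -- upper bound: our coupling witnesses the infimum
    exact le_of_le_of_eq (iInf₂_le γ ⟨hfst, hsnd⟩) hcost
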